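/- A 1-Lipschitz transformation f: ℤ_p → ℤ_p is ergodic with respect to the Haar measure μ_p if and only if for every k ≥ 1 the induced map f mod p^k on ℤ/p^kℤ is a cyclic permutation of length p^k (i.e., transitive on ℤ/p^kℤ). -/

import Mathlib

open MeasureTheory ProbabilityTheory

noncomputable instance (p : ℕ) [Fact p.Prime] : MeasurableSpace ℤ_[p] := borel _
instance (p : ℕ) [Fact p.Prime] : BorelSpace ℤ_[p] := ⟨rfl⟩

namespace ErgodicPadicAux

open PadicInt TopologicalSpace Set Function
open scoped ENNReal

variable {p : ℕ} [hp : Fact p.Prime]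

/-- The clopen ball: preimage of a residue mod `p^k`. -/
def B (p : ℕ) [Fact p.Prime] (k : ℕ) (a : ZMod (p ^ k)) : Set ℤ_[p] :=
  (PadicInt.toZModPow k) ⁻¹' {a}

lemma mem_B {k : ℕ} {a : ZMod (p ^ k)} {x : ℤ_[p]} : x ∈ B p k a ↔ toZModPow k x = a :=
  Iff.rfl

lemma toZModPow_eq_iff (k : ℕ) (x y : ℤ_[p]) :
    toZModPow k x = toZModPow k y ↔ ‖x - y‖ ≤ (p : ℝ) ^ (-(k : ℤ)) := by
  rw [PadicInt.norm_le_pow_iff_mem_span_pow, ← PadicInt.ker_toZModPow, RingHom.mem_ker,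
    map_sub, sub_eq_zero]

lemma isOpen_B (k : ℕ) (a : ZMod (p ^ k)) : IsOpen (B p k a) := by
  rw [Metric.isOpen_iff]
  intro x hx
  have hp0 : (0 : ℝ) < p := by exact_mod_cast hp.out.pos
  refine ⟨(p : ℝ) ^ (-(k : ℤ) + 1), zpow_pos hp0 _, fun y hy => ?_⟩
  have h1 : toZModPow k y = toZModPow k x := by
    rw [toZModPow_eq_iff, PadicInt.norm_le_pow_iff_norm_lt_pow_add_one]
    simpa [dist_eq_norm] using hy
  exact mem_B.2 (h1.trans (mem_B.1 hx))

lemma measurableSet_B (k : ℕ) (a : ZMod (p ^ k)) : MeasurableSet (B p k a) :=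
  (isOpen_B k a).measurableSet

lemma B_subset_B {k m : ℕ} (h : k ≤ m) {a : ZMod (p ^ k)} {b : ZMod (p ^ m)} {x : ℤ_[p]}
    (hxa : x ∈ B p k a) (hxb : x ∈ B p m b) : B p m b ⊆ B p k a := by
  intro y hy
  have hp1 : (1 : ℝ) ≤ p := by exact_mod_cast hp.out.one_lt.le
  have h1 : ‖y - x‖ ≤ (p : ℝ) ^ (-(m : ℤ)) :=
    (toZModPow_eq_iff m y x).1 ((mem_B.1 hy).trans (mem_B.1 hxb).symm)
  have h2 : ‖y - x‖ ≤ (p : ℝ) ^ (-(k : ℤ)) :=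
    h1.trans (zpow_le_zpow_right₀ hp1 (by exact_mod_cast neg_le_neg (Int.ofNat_le.2 h)))
  exact mem_B.2 (((toZModPow_eq_iff k y x).2 h2).trans (mem_B.1 hxa))

/-- The π-system of balls of level `k ≥ 1`. -/
def S (p : ℕ) [Fact p.Prime] : Set (Set ℤ_[p]) :=
  {s | ∃ (k : ℕ) (a : ZMod (p ^ k)), 1 ≤ k ∧ s = B p k a}

lemma isPiSystem_S : IsPiSystem (S p) := by
  rintro s ⟨k, a, hk, rfl⟩ t ⟨m, b, hm, rfl⟩ ⟨x, hxa, hxb⟩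
  rcases le_total k m with h | h
  · exact ⟨m, b, hm, by rw [Set.inter_eq_right.2 (B_subset_B h hxa hxb)]⟩
  · exact ⟨k, a, hk, by rw [Set.inter_eq_left.2 (B_subset_B h hxb hxa)]⟩

lemma isTopologicalBasis_S : IsTopologicalBasis (S p) := by
  apply isTopologicalBasis_of_isOpen_of_nhds
  · rintro u ⟨k, a, hk, rfl⟩
    exact isOpen_B k a
  · intro x u hxu hu
    obtain ⟨ε, hε, hball⟩ := Metric.isOpen_iff.1 hu x hxu
    have hp0 : (0 : ℝ) < p := by exact_mod_cast hp.out.pos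
    have hpinv : (p : ℝ)⁻¹ < 1 := by
      rw [inv_lt_one_iff₀]
      right
      exact_mod_cast hp.out.one_lt
    obtain ⟨k, hk⟩ := exists_pow_lt_of_lt_one hε hpinv
    refine ⟨B p (k + 1) (toZModPow (k + 1) x), ⟨k + 1, _, le_add_self, rfl⟩, rfl, fun y hy => ?_⟩
    apply hball
    have h1 : ‖y - x‖ ≤ (p : ℝ) ^ (-((k : ℤ) + 1)) := by
      have := (toZModPow_eq_iff (k + 1) y x).1 (mem_B.1 hy)
      simpa using this
    have h2 : (p : ℝ) ^ (-((k : ℤ) + 1)) < ε := by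
      calc (p : ℝ) ^ (-((k : ℤ) + 1)) ≤ (p : ℝ) ^ (-(k : ℤ)) := by
            apply zpow_le_zpow_right₀ (by exact_mod_cast hp.out.one_lt.le)
            omega
        _ = ((p : ℝ)⁻¹) ^ k := by
            rw [zpow_neg, ← inv_zpow, zpow_natCast]
        _ < ε := hk
    rw [Metric.mem_ball, dist_eq_norm]
    exact lt_of_le_of_lt h1 h2

lemma measurableSpace_eq :
    (inferInstance : MeasurableSpace ℤ_[p]) = MeasurableSpace.generateFrom (S p) :=
  BorelSpace.measurable_eq.trans isTopologicalBasis_S.borel_eq_generateFrom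

variable {μ : Measure ℤ_[p]}

lemma meas_B_const (hμ : μ.IsAddHaarMeasure) (k : ℕ) (a b : ZMod (p ^ k)) :
    μ (B p k a) = μ (B p k b) := by
  haveI : NeZero (p ^ k) := ⟨pow_ne_zero k hp.out.ne_zero⟩
  have key : (fun x => (((a - b).val : ℕ) : ℤ_[p]) + x) ⁻¹' B p k a = B p k b := by
    ext x
    simp only [Set.mem_preimage, mem_B, map_add, map_natCast, ZMod.natCast_zmod_val]
    rw [add_comm, ← eq_sub_iff_add_eq, sub_sub_cancel]
  rw [← key, measure_preimage_add]

lemma meas_preimage_finset (hμ : μ.IsAddHaarMeasure) (k : ℕ) (T : Finset (ZMod (p ^ k))) :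
    μ ((toZModPow k) ⁻¹' (T : Set (ZMod (p ^ k)))) = T.card * μ (B p k 0) := by
  have h1 : (toZModPow k) ⁻¹' (T : Set (ZMod (p ^ k))) = ⋃ b ∈ T, B p k b := by
    ext x
    simp [B]
  rw [h1, measure_biUnion_finset ?_ fun b _ => measurableSet_B k b]
  · rw [Finset.sum_congr rfl fun b _ => meas_B_const hμ k b 0, Finset.sum_const, nsmul_eq_mul]
  · intro b _ c _ hbc
    refine Set.disjoint_left.2 fun x hxb hxc => hbc ?_
    exact (mem_B.1 hxb).symm.trans (mem_B.1 hxc)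

lemma card_mul_meas (hμ : μ.IsAddHaarMeasure) (hμ1 : IsProbabilityMeasure μ) (k : ℕ) :
    ((p ^ k : ℕ) : ℝ≥0∞) * μ (B p k 0) = 1 := by
  haveI : NeZero (p ^ k) := ⟨pow_ne_zero k hp.out.ne_zero⟩
  have h := meas_preimage_finset hμ k Finset.univ
  rw [Finset.coe_univ, Set.preimage_univ, measure_univ, Finset.card_univ, ZMod.card] at h
  exact h.symm

lemma meas_B_ne_zero (hμ : μ.IsAddHaarMeasure) (hμ1 : IsProbabilityMeasure μ) (k : ℕ) :
    μ (B p k 0) ≠ 0 := by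
  intro h
  have := card_mul_meas hμ hμ1 k
  rw [h, mul_zero] at this
  exact one_ne_zero this.symm

variable {f : ℤ_[p] → ℤ_[p]}

lemma semiconj (hf : ∀ x y : ℤ_[p], ‖f x - f y‖ ≤ ‖x - y‖) (k : ℕ) (x : ℤ_[p]) :
    toZModPow k (f x) = toZModPow k (f (((toZModPow k x).val : ℕ) : ℤ_[p])) := by
  haveI : NeZero (p ^ k) := ⟨pow_ne_zero k hp.out.ne_zero⟩
  rw [toZModPow_eq_iff]
  refine le_trans (hf _ _) ?_
  rw [← toZModPow_eq_iff]
  simp [map_natCast, ZMod.natCast_zmod_val]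

lemma preimage_f_set (hf : ∀ x y : ℤ_[p], ‖f x - f y‖ ≤ ‖x - y‖) (k : ℕ)
    (T : Set (ZMod (p ^ k))) :
    f ⁻¹' ((toZModPow k) ⁻¹' T) =
      (toZModPow k) ⁻¹'
        ((fun z : ZMod (p ^ k) => toZModPow k (f ((z.val : ℕ) : ℤ_[p]))) ⁻¹' T) := by
  ext x
  simp only [Set.mem_preimage]
  rw [semiconj hf k x]

end ErgodicPadicAux

open ErgodicPadicAux PadicInt Function Set
open scoped ENNReal

theorem ergodic_iff_transitive_mod (p : ℕ) [Fact p.Prime]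
    (μ : Measure ℤ_[p]) (hμ : μ.IsAddHaarMeasure) (hμ1 : IsProbabilityMeasure μ)
    (f : ℤ_[p] → ℤ_[p]) (hf : ∀ x y : ℤ_[p], ‖f x - f y‖ ≤ ‖x - y‖) :
    Ergodic f μ ↔
      ∀ k : ℕ, 1 ≤ k →
        ∀ x y : ZMod (p ^ k), ∃ n : ℕ,
          (fun z : ZMod (p ^ k) => PadicInt.toZModPow k (f ((z.val : ℕ) : ℤ_[p])))^[n] x = y := by
  classical
  have hp : Fact p.Prime := ‹_›
  constructor
  · -- Ergodic → transitive
    intro hE k hk x y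
    haveI : NeZero (p ^ k) := ⟨pow_ne_zero k hp.out.ne_zero⟩
    set g : ZMod (p ^ k) → ZMod (p ^ k) :=
      fun z => PadicInt.toZModPow k (f ((z.val : ℕ) : ℤ_[p])) with hg
    -- g is surjective
    have hgs : Function.Surjective g := by
      intro a
      by_contra hna
      push_neg at hna
      have hpre : f ⁻¹' B p k a = ∅ := by
        rw [show B p k a = (toZModPow k) ⁻¹' {a} from rfl, preimage_f_set hf k {a}]
        have h0 : (g ⁻¹' {a} : Set (ZMod (p ^ k))) = ∅ := by
          ext b
          simp [hna b]
        rw [← hg, h0, Set.preimage_empty]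
      have h1 : μ (f ⁻¹' B p k a) = μ (B p k a) :=
        hE.toMeasurePreserving.measure_preimage (measurableSet_B k a).nullMeasurableSet
      rw [hpre, measure_empty, meas_B_const hμ k a 0] at h1
      exact meas_B_ne_zero hμ hμ1 k h1.symm
    have hgi : Function.Injective g := Finite.injective_iff_surjective.2 hgs
    -- the orbit of x
    set C : Finset (ZMod (p ^ k)) := Finset.univ.filter (fun b => ∃ n, g^[n] x = b) with hC
    have hxC : x ∈ C := by
      simp only [hC, Finset.mem_filter, Finset.mem_univ, true_and]
      exact ⟨0, rfl⟩
    have hgC : ∀ b ∈ C, g b ∈ C := by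
      intro b hb
      simp only [hC, Finset.mem_filter, Finset.mem_univ, true_and] at hb ⊢
      obtain ⟨n, rfl⟩ := hb
      exact ⟨n + 1, Function.iterate_succ_apply' g n x⟩
    have himg : C.image g = C := by
      apply Finset.eq_of_subset_of_card_le
      · intro b hb
        obtain ⟨c, hc, rfl⟩ := Finset.mem_image.1 hb
        exact hgC c hc
      · rw [Finset.card_image_of_injective _ hgi]
    have hpreC : g ⁻¹' (C : Set (ZMod (p ^ k))) = (C : Set (ZMod (p ^ k))) := by
      ext b
      simp only [Set.mem_preimage, Finset.mem_coe]
      constructor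
      · intro hgb
        rw [← himg] at hgb
        obtain ⟨c, hc, hcb⟩ := Finset.mem_image.1 hgb
        exact (hgi hcb) ▸ hc
      · exact hgC b
    set U : Set ℤ_[p] := (toZModPow k) ⁻¹' (C : Set (ZMod (p ^ k))) with hU
    have hUmeas : MeasurableSet U := by
      have h1 : U = ⋃ b ∈ C, B p k b := by
        ext z
        simp [hU, B]
      rw [h1]
      exact C.measurableSet_biUnion fun b _ => measurableSet_B k b
    have hUinv : f ⁻¹' U = U := by
      rw [hU, preimage_f_set hf k, ← hg, hpreC]
    have hUmeasure : μ U = C.card * μ (B p k 0) := meas_preimage_finset hμ k C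
    rcases hE.toPreErgodic.prob_eq_zero_or_one hUmeas hUinv with h0 | h1
    · exfalso
      rw [hUmeasure] at h0
      rcases mul_eq_zero.1 h0 with h | h
      · exact (Nat.cast_ne_zero.2 (Finset.card_ne_zero_of_mem hxC)) h
      · exact meas_B_ne_zero hμ hμ1 k h
    · have hcardeq : (C.card : ℝ≥0∞) * μ (B p k 0) = ((p ^ k : ℕ) : ℝ≥0∞) * μ (B p k 0) := by
        rw [← hUmeasure, h1, card_mul_meas hμ hμ1 k]
      have hcard : C.card = p ^ k := by
        have := (ENNReal.mul_left_inj (meas_B_ne_zero hμ hμ1 k)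
          (measure_ne_top μ _)).1 hcardeq
        exact_mod_cast this
      have hCuniv : C = Finset.univ := by
        apply Finset.eq_univ_of_card
        rw [hcard, ZMod.card]
      have hyC : y ∈ C := hCuniv ▸ Finset.mem_univ y
      simp only [hC, Finset.mem_filter, Finset.mem_univ, true_and] at hyC
      exact hyC
  · -- transitive → Ergodic
    intro H
    have hcont : Continuous f := by
      have h1 : LipschitzWith 1 f := by
        apply LipschitzWith.of_dist_le_mul
        intro x y
        rw [NNReal.coe_one, one_mul, dist_eq_norm, dist_eq_norm]
        exact hf x y
      exact h1.continuous
    have hmeas : Measurable f := hcont.measurable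
    -- bijectivity of induced maps
    have hbij : ∀ k, 1 ≤ k →
        Function.Bijective
          (fun z : ZMod (p ^ k) => PadicInt.toZModPow k (f ((z.val : ℕ) : ℤ_[p]))) := by
      intro k hk
      haveI : NeZero (p ^ k) := ⟨pow_ne_zero k hp.out.ne_zero⟩
      set g : ZMod (p ^ k) → ZMod (p ^ k) :=
        fun z => PadicInt.toZModPow k (f ((z.val : ℕ) : ℤ_[p])) with hg
      have hsurj : Function.Surjective g := by
        intro y
        obtain ⟨n, hn⟩ := H k hk (g y) y
        refine ⟨g^[n] y, ?_⟩
        rw [← Function.iterate_succ_apply' g n y, Function.iterate_succ_apply g n y]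
        exact hn
      exact ⟨Finite.injective_iff_surjective.2 hsurj, hsurj⟩
    -- preimages of balls
    have hfB : ∀ k, 1 ≤ k → ∀ b : ZMod (p ^ k),
        f ⁻¹' B p k ((fun z : ZMod (p ^ k) =>
          PadicInt.toZModPow k (f ((z.val : ℕ) : ℤ_[p]))) b) = B p k b := by
      intro k hk b
      set g : ZMod (p ^ k) → ZMod (p ^ k) :=
        fun z => PadicInt.toZModPow k (f ((z.val : ℕ) : ℤ_[p])) with hg
      rw [show B p k (g b) = (toZModPow k) ⁻¹' {g b} from rfl, preimage_f_set hf k, ← hg]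
      have h0 : (g ⁻¹' {g b} : Set (ZMod (p ^ k))) = {b} := by
        ext c
        simp only [Set.mem_preimage, Set.mem_singleton_iff]
        exact ⟨fun h => (hbij k hk).1 h, fun h => h ▸ rfl⟩
      rw [h0]
      rfl
    have hpreB : ∀ k, 1 ≤ k → ∀ a : ZMod (p ^ k), ∃ b, f ⁻¹' B p k a = B p k b := by
      intro k hk a
      obtain ⟨b, hb⟩ := (hbij k hk).2 a
      exact ⟨b, by rw [← hb]; exact hfB k hk b⟩
    -- measure preservation
    have hmp : MeasurePreserving f μ μ := by
      refine ⟨hmeas, ?_⟩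
      haveI : IsProbabilityMeasure (μ.map f) := Measure.isProbabilityMeasure_map hmeas.aemeasurable
      refine ext_of_generate_finite (S p) measurableSpace_eq isPiSystem_S ?_ (by simp)
      rintro s ⟨k, a, hk, rfl⟩
      rw [Measure.map_apply hmeas (measurableSet_B k a)]
      obtain ⟨b, hb⟩ := hpreB k hk a
      rw [hb, meas_B_const hμ k b a]
    refine ⟨hmp, ?_⟩
    constructor
    intro s hs hinv
    rw [Filter.eventuallyConst_set']
    have key : μ.restrict s = (μ s) • μ := by
      refine ext_of_generate_finite (S p) measurableSpace_eq isPiSystem_S ?_ ?_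
      · rintro t ⟨k, a, hk, rfl⟩
        haveI : NeZero (p ^ k) := ⟨pow_ne_zero k hp.out.ne_zero⟩
        set g : ZMod (p ^ k) → ZMod (p ^ k) :=
          fun z => PadicInt.toZModPow k (f ((z.val : ℕ) : ℤ_[p])) with hg
        have hstep : ∀ b, μ (B p k (g b) ∩ s) = μ (B p k b ∩ s) := by
          intro b
          have h1 : f ⁻¹' (B p k (g b) ∩ s) = B p k b ∩ s := by
            rw [Set.preimage_inter, hinv, hfB k hk b]
          calc μ (B p k (g b) ∩ s)
              = μ (f ⁻¹' (B p k (g b) ∩ s)) :=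
                (hmp.measure_preimage ((measurableSet_B k _).inter hs).nullMeasurableSet).symm
            _ = μ (B p k b ∩ s) := by rw [h1]
        have hiter : ∀ n b, μ (B p k (g^[n] b) ∩ s) = μ (B p k b ∩ s) := by
          intro n
          induction n with
          | zero => intro b; rfl
          | succ n ih =>
            intro b
            rw [Function.iterate_succ_apply' g n b, hstep (g^[n] b), ih b]
        have hconst : ∀ c : ZMod (p ^ k), μ (B p k c ∩ s) = μ (B p k a ∩ s) := by
          intro c
          obtain ⟨n, hn⟩ := H k hk a c
          rw [← hn, hiter n a]
        have hsum : ((p ^ k : ℕ) : ℝ≥0∞) * μ (B p k a ∩ s) = μ s := by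
          have hpart : μ s = ∑ b : ZMod (p ^ k), μ (B p k b ∩ s) := by
            rw [← measure_biUnion_finset ?_ fun b _ => (measurableSet_B k b).inter hs]
            · congr 1
              ext z
              simp only [Finset.mem_univ, Set.iUnion_true, Set.mem_iUnion, Set.mem_inter_iff,
                mem_B]
              exact ⟨fun h => ⟨toZModPow k z, rfl, h⟩, fun ⟨b, _, h⟩ => h⟩
            · intro b _ c _ hbc
              refine Set.disjoint_left.2 fun z hzb hzc => hbc ?_
              exact (mem_B.1 hzb.1).symm.trans (mem_B.1 hzc.1)
          rw [hpart, Finset.sum_congr rfl fun b _ => hconst b, Finset.sum_const,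
            nsmul_eq_mul, Finset.card_univ, ZMod.card]
        rw [Measure.restrict_apply (measurableSet_B k a), Measure.smul_apply, smul_eq_mul,
          ← hsum, meas_B_const hμ k a 0, mul_right_comm, card_mul_meas hμ hμ1 k, one_mul]
      · rw [Measure.restrict_apply MeasurableSet.univ, Set.univ_inter, Measure.smul_apply,
          smul_eq_mul, measure_univ, mul_one]
    have h2 : μ s = μ s * μ s := by
      calc μ s = (μ.restrict s) s := by rw [Measure.restrict_apply hs, Set.inter_self]
        _ = ((μ s) • μ) s := by rw [key]
        _ = μ s * μ s := by rw [Measure.smul_apply, smul_eq_mul]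
    by_cases h0 : μ s = 0
    · left
      exact ae_eq_empty.2 h0
    · right
      rw [ae_eq_univ, prob_compl_eq_zero_iff hs]
      have h3 : μ s * 1 = μ s * μ s := by rw [mul_one, ← h2]
      exact ((ENNReal.mul_right_inj h0 (measure_ne_top μ s)).1 h3).symm
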